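/- Let U_I : [0,∞) → M₂(ℝ) be a matrix-valued nondecreasing function, R : (0,∞) → (0,∞) regularly varying at infinity with index β ∈ (0,1], D ∈ M₂(ℝ), and Γ_β > 0, such that lim_{t→∞} U_I(ty)/R(t) = Γ_β D y^β for every y > 0. Let μ̂₂ : [0,∞) → [1,∞) be regularly varying with index 1−β and nondecreasing. Then for any fixed ε ∈ (0,1), lim_{t→∞} (μ̂₂²(t)/R(t)) ∫₀^{1−ε} (1/μ̂₂²(t(1−y))) dU_I(ty) = β Γ_β D ∫₀^{1−ε} (1−y)^{2β−2} y^{β−1} dy. -/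

import Mathlib

open Filter Set MeasureTheory intervalIntegral

lemma aux_leftLim (f : StieltjesFunction ℝ) (h0 : ∀ t < 0, f t = 0) :
    Function.leftLim f 0 = 0 := by
  apply leftLim_eq_of_tendsto
  apply Tendsto.congr' _ (tendsto_const_nhds (x := (0:ℝ)))
  filter_upwards [self_mem_nhdsWithin] with x hx
  exact (h0 x hx).symm

lemma aux_rpow_subadd {a b p : ℝ} (ha : 0 ≤ a) (hb : 0 ≤ b) (hp : 0 ≤ p) (hp1 : p ≤ 1) :
    (a + b) ^ p ≤ a ^ p + b ^ p := by
  have key := NNReal.rpow_add_le_add_rpow a.toNNReal b.toNNReal hp hp1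
  have h2 : ((a.toNNReal + b.toNNReal : NNReal) : ℝ) ^ p
      ≤ ((a.toNNReal : ℝ)) ^ p + ((b.toNNReal : ℝ)) ^ p := by
    rw [← NNReal.coe_rpow, ← NNReal.coe_rpow, ← NNReal.coe_rpow]
    exact_mod_cast key
  simpa [NNReal.coe_add, Real.coe_toNNReal a ha, Real.coe_toNNReal b hb] using h2

/-- the `k`-th piece of the partition `0 = x 0 ≤ x 1 ≤ ⋯` of `[0, x n]`. -/
def piece (x : ℕ → ℝ) (k : ℕ) : Set ℝ :=
  if k = 0 then Set.Icc (x 0) (x 1) else Set.Ioc (x k) (x (k+1))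

lemma piece_toReal (f : StieltjesFunction ℝ) (hf0 : ∀ t < 0, f t = 0)
    (x : ℕ → ℝ) (hx : Monotone x) (hx0 : x 0 = 0) (k : ℕ) :
    (f.measure (piece x k)).toReal = f (x (k+1)) - (if k = 0 then 0 else f (x k)) := by
  have hx01 : x 0 ≤ x 1 := hx (Nat.zero_le 1)
  have hnn : (0:ℝ) ≤ f (x 1) := by
    have h1 : f (-1) = 0 := hf0 (-1) (by norm_num)
    rw [← h1]
    exact f.mono (by rw [hx0] at hx01; linarith)
  rcases k with _ | k
  · simp only [piece, reduceIte, StieltjesFunction.measure_Icc, hx0,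
      aux_leftLim f hf0, sub_zero, Nat.zero_add, if_true]
    rw [ENNReal.toReal_ofReal hnn]
  · simp only [piece, Nat.succ_ne_zero, if_false, StieltjesFunction.measure_Ioc]
    rw [ENNReal.toReal_ofReal
      (by linarith [f.mono (hx (Nat.le_succ (k+1)))] : (0:ℝ) ≤ f (x (k+2)) - f (x (k+1)))]

lemma aux_sandwich (f : StieltjesFunction ℝ)
    (h : ℝ → ℝ) (hmono : Monotone h) (hmeas : Measurable h)
    (hnn : ∀ w, 0 ≤ h w) (hb : ∀ w, h w ≤ 1)
    (x : ℕ → ℝ) (hx : Monotone x) (n : ℕ) (hn : 1 ≤ n) :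
    (∑ k ∈ Finset.range n, h (x k) * (f.measure (piece x k)).toReal)
      ≤ ∫ w in Set.Icc (x 0) (x n), h w ∂f.measure ∧
    (∫ w in Set.Icc (x 0) (x n), h w ∂f.measure)
      ≤ ∑ k ∈ Finset.range n, h (x (k+1)) * (f.measure (piece x k)).toReal := by
  have hfinIcc : ∀ a b : ℝ, f.measure (Set.Icc a b) ≠ ⊤ := by
    intro a b; rw [StieltjesFunction.measure_Icc]; exact ENNReal.ofReal_ne_top
  have hfinIoc : ∀ a b : ℝ, f.measure (Set.Ioc a b) ≠ ⊤ := by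
    intro a b; rw [StieltjesFunction.measure_Ioc]; exact ENNReal.ofReal_ne_top
  have hIntIcc : ∀ a b : ℝ, IntegrableOn h (Set.Icc a b) f.measure := by
    intro a b
    exact Measure.integrableOn_of_bounded (hfinIcc a b) hmeas.aestronglyMeasurable
      (ae_of_all _ fun w => by rw [Real.norm_eq_abs, abs_of_nonneg (hnn w)]; exact hb w)
  have hIntIoc : ∀ a b : ℝ, IntegrableOn h (Set.Ioc a b) f.measure := by
    intro a b
    exact Measure.integrableOn_of_bounded (hfinIoc a b) hmeas.aestronglyMeasurable
      (ae_of_all _ fun w => by rw [Real.norm_eq_abs, abs_of_nonneg (hnn w)]; exact hb w)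
  have hfin : ∀ k, f.measure (piece x k) ≠ ⊤ := by
    intro k; unfold piece; split
    · exact hfinIcc _ _
    · exact hfinIoc _ _
  have hmeasset : ∀ k, MeasurableSet (piece x k) := by
    intro k; unfold piece; split
    · exact measurableSet_Icc
    · exact measurableSet_Ioc
  have hIntP : ∀ k, IntegrableOn h (piece x k) f.measure := by
    intro k; unfold piece; split
    · exact hIntIcc _ _
    · exact hIntIoc _ _
  have hinP : ∀ k, ∀ w ∈ piece x k, x k ≤ w ∧ w ≤ x (k+1) := by
    intro k w hw
    unfold piece at hw; split at hw
    · rename_i hk; subst hk; exact ⟨hw.1, hw.2⟩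
    · exact ⟨hw.1.le, hw.2⟩
  have hdecomp : ∀ m : ℕ, 1 ≤ m →
      (∫ w in Set.Icc (x 0) (x m), h w ∂f.measure)
        = ∑ k ∈ Finset.range m, ∫ w in piece x k, h w ∂f.measure := by
    intro m hm
    induction m, hm using Nat.le_induction with
    | base =>
      simp [piece]
    | succ m hm ih =>
      have hsplit : Set.Icc (x 0) (x (m+1)) = Set.Icc (x 0) (x m) ∪ Set.Ioc (x m) (x (m+1)) :=
        (Set.Icc_union_Ioc_eq_Icc (hx (Nat.zero_le m)) (hx (Nat.le_succ m))).symm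
      have hdisj : Disjoint (Set.Icc (x 0) (x m)) (Set.Ioc (x m) (x (m+1))) := by
        rw [Set.disjoint_left]
        intro w hw1 hw2
        exact absurd hw1.2 (not_le.2 hw2.1)
      rw [hsplit, setIntegral_union hdisj measurableSet_Ioc (hIntIcc _ _) (hIntIoc _ _),
        ih, Finset.sum_range_succ]
      congr 1
      unfold piece
      rw [if_neg (by omega)]
  have hlow : ∀ k, h (x k) * (f.measure (piece x k)).toReal
      ≤ ∫ w in piece x k, h w ∂f.measure := by
    intro k
    have := setIntegral_mono_on (f := fun _ => h (x k)) (g := h)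
      (integrableOn_const (hfin k)) (hIntP k) (hmeasset k)
      (fun w hw => hmono (hinP k w hw).1)
    rwa [setIntegral_const, smul_eq_mul, mul_comm] at this
  have hhigh : ∀ k, (∫ w in piece x k, h w ∂f.measure)
      ≤ h (x (k+1)) * (f.measure (piece x k)).toReal := by
    intro k
    have := setIntegral_mono_on (f := h) (g := fun _ => h (x (k+1)))
      (hIntP k) (integrableOn_const (hfin k)) (hmeasset k)
      (fun w hw => hmono (hinP k w hw).2)
    rwa [setIntegral_const, smul_eq_mul, mul_comm] at this
  rw [hdecomp n hn]
  exact ⟨Finset.sum_le_sum fun k _ => hlow k, Finset.sum_le_sum fun k _ => hhigh k⟩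

lemma aux_mu_ratio (β : ℝ) (mu : ℝ → ℝ)
    (hmurv : ∀ a > (0:ℝ), Tendsto (fun t => mu (a * t) / mu t) atTop (nhds (a ^ (1 - β))))
    (a : ℝ) (ha : 0 < a) :
    Tendsto (fun t => (mu t / mu (t * a)) ^ 2) atTop (nhds (a ^ (2*β - 2))) := by
  have h1 := hmurv a⁻¹ (inv_pos.2 ha)
  have h2 : Tendsto (fun t : ℝ => t * a) atTop atTop :=
    Tendsto.atTop_mul_const ha tendsto_id
  have h4 : Tendsto (fun t => mu t / mu (t * a)) atTop (nhds (a⁻¹ ^ (1-β))) := by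
    apply (h1.comp h2).congr
    intro t
    simp only [Function.comp]
    congr 2
    field_simp
  have h5 := h4.pow 2
  have hval : (a⁻¹ ^ (1-β)) ^ 2 = a ^ (2*β - 2) := by
    rw [sq, ← Real.rpow_add (inv_pos.2 ha), Real.inv_rpow ha.le, ← Real.rpow_neg ha.le]
    ring_nf
  rwa [hval] at h5

lemma aux_riemann (β ε d : ℝ) (hβ0 : 0 < β) (hβ1 : β ≤ 1) (hε0 : 0 < ε) (hε1 : ε < 1)
    (hd : 0 ≤ d) (n : ℕ) (hn : 1 ≤ n) (y : ℕ → ℝ) (hy : ∀ k, y k = (1-ε) * k / n) :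
    (∑ k ∈ Finset.range n, (1 - y k) ^ (2*β-2) * (d * (y (k+1) ^ β - y k ^ β)))
      ≤ d * (β * ∫ u in (0:ℝ)..(1-ε), (1-u) ^ (2*β-2) * u ^ (β-1)) ∧
    (d * (β * ∫ u in (0:ℝ)..(1-ε), (1-u) ^ (2*β-2) * u ^ (β-1)))
      ≤ (∑ k ∈ Finset.range n, (1 - y (k+1)) ^ (2*β-2) * (d * (y (k+1) ^ β - y k ^ β))) ∧
    (∑ k ∈ Finset.range n, (1 - y (k+1)) ^ (2*β-2) * (d * (y (k+1) ^ β - y k ^ β)))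
      - (∑ k ∈ Finset.range n, (1 - y k) ^ (2*β-2) * (d * (y (k+1) ^ β - y k ^ β)))
      ≤ d * ε ^ (2*β-2) * ((1-ε)/n) ^ β := by
  have hnpos : (0:ℝ) < n := by exact_mod_cast hn
  have h1e : (0:ℝ) ≤ 1 - ε := by linarith
  have hy0 : y 0 = 0 := by simp [hy]
  have hyn : y n = 1 - ε := by rw [hy]; field_simp
  have hymono : Monotone y := by
    intro a b hab
    rw [hy, hy]
    have hc : (a:ℝ) ≤ (b:ℝ) := Nat.cast_le.2 hab
    have := hnpos
    gcongr
  have hynn : ∀ k, 0 ≤ y k := by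
    intro k; rw [hy]; positivity
  have hyle : ∀ k, k ≤ n → y k ≤ 1 - ε := fun k hk => hyn ▸ hymono hk
  have hysucc : ∀ k, y (k+1) = y k + (1-ε)/n := by
    intro k; rw [hy, hy]; push_cast; field_simp
  have hgg : ∀ u v : ℝ, 0 ≤ u → u ≤ v → v ≤ 1 - ε →
      (1 - u) ^ (2*β-2) ≤ (1 - v) ^ (2*β-2) := by
    intro u v hu huv hv
    exact Real.rpow_le_rpow_of_nonpos (by linarith) (by linarith) (by linarith)
  have hbase : ∀ a b : ℝ, IntervalIntegrable (fun u : ℝ => β * u ^ (β-1)) volume a b :=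
    fun a b => (intervalIntegral.intervalIntegrable_rpow' (by linarith)).const_mul β
  have hKint : ∀ k, k + 1 ≤ n → IntervalIntegrable
      (fun u : ℝ => (1-u) ^ (2*β-2) * (β * u ^ (β-1))) volume (y k) (y (k+1)) := by
    intro k hk
    apply (hbase _ _).continuousOn_mul
    apply ContinuousOn.rpow_const ((continuous_const.sub continuous_id).continuousOn)
    intro u hu
    rw [Set.uIcc_of_le (hymono (Nat.le_succ k))] at hu
    have hu1 : u ≤ 1 - ε := hu.2.trans (hyle _ hk)
    left
    simp only [Pi.sub_apply, id_eq]
    intro h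
    linarith
  have hprime : ∀ k, (∫ u in (y k)..(y (k+1)), β * u ^ (β-1))
      = y (k+1) ^ β - y k ^ β := by
    intro k
    rw [intervalIntegral.integral_const_mul, integral_rpow (Or.inl (by linarith))]
    have hb : β - 1 + 1 = β := by ring
    rw [hb]
    field_simp
  have hKlow : ∀ k, k + 1 ≤ n →
      (1 - y k) ^ (2*β-2) * (y (k+1) ^ β - y k ^ β)
        ≤ ∫ u in (y k)..(y (k+1)), (1-u) ^ (2*β-2) * (β * u ^ (β-1)) := by
    intro k hk
    rw [← hprime k, ← intervalIntegral.integral_const_mul]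
    apply intervalIntegral.integral_mono_on (hymono (Nat.le_succ k))
      ((hbase _ _).const_mul _) (hKint k hk)
    intro u hu
    have hu0 : 0 ≤ u := le_trans (hynn k) hu.1
    apply mul_le_mul_of_nonneg_right
      (hgg (y k) u (hynn k) hu.1 (hu.2.trans (hyle _ hk)) |>.trans_eq rfl)
    · positivity
  have hKhigh : ∀ k, k + 1 ≤ n →
      (∫ u in (y k)..(y (k+1)), (1-u) ^ (2*β-2) * (β * u ^ (β-1)))
        ≤ (1 - y (k+1)) ^ (2*β-2) * (y (k+1) ^ β - y k ^ β) := by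
    intro k hk
    rw [← hprime k, ← intervalIntegral.integral_const_mul]
    apply intervalIntegral.integral_mono_on (hymono (Nat.le_succ k))
      (hKint k hk) ((hbase _ _).const_mul _)
    intro u hu
    have hu0 : 0 ≤ u := le_trans (hynn k) hu.1
    apply mul_le_mul_of_nonneg_right
      (hgg u (y (k+1)) hu0 hu.2 (hyle _ hk))
    · positivity
  have hadj := intervalIntegral.sum_integral_adjacent_intervals
    (f := fun u : ℝ => (1-u) ^ (2*β-2) * (β * u ^ (β-1))) (μ := volume) (a := y) (n := n)
    (fun k hk => hKint k hk)
  rw [hy0, hyn] at hadj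
  have hI : (∑ k ∈ Finset.range n, ∫ u in (y k)..(y (k+1)), (1-u) ^ (2*β-2) * (β * u ^ (β-1)))
      = β * ∫ u in (0:ℝ)..(1-ε), (1-u) ^ (2*β-2) * u ^ (β-1) := by
    rw [hadj, ← intervalIntegral.integral_const_mul]
    apply intervalIntegral.integral_congr
    intro u _
    ring
  constructor
  · calc (∑ k ∈ Finset.range n, (1 - y k) ^ (2*β-2) * (d * (y (k+1) ^ β - y k ^ β)))
        = d * ∑ k ∈ Finset.range n, (1 - y k) ^ (2*β-2) * (y (k+1) ^ β - y k ^ β) := by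
          rw [Finset.mul_sum]; exact Finset.sum_congr rfl fun k _ => by ring
      _ ≤ d * ∑ k ∈ Finset.range n,
            ∫ u in (y k)..(y (k+1)), (1-u) ^ (2*β-2) * (β * u ^ (β-1)) := by
          apply mul_le_mul_of_nonneg_left _ hd
          exact Finset.sum_le_sum fun k hk => hKlow k (Finset.mem_range.1 hk)
      _ = d * (β * ∫ u in (0:ℝ)..(1-ε), (1-u) ^ (2*β-2) * u ^ (β-1)) := by rw [hI]
  constructor
  · calc d * (β * ∫ u in (0:ℝ)..(1-ε), (1-u) ^ (2*β-2) * u ^ (β-1))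
        = d * ∑ k ∈ Finset.range n,
            ∫ u in (y k)..(y (k+1)), (1-u) ^ (2*β-2) * (β * u ^ (β-1)) := by rw [hI]
      _ ≤ d * ∑ k ∈ Finset.range n, (1 - y (k+1)) ^ (2*β-2) * (y (k+1) ^ β - y k ^ β) := by
          apply mul_le_mul_of_nonneg_left _ hd
          exact Finset.sum_le_sum fun k hk => hKhigh k (Finset.mem_range.1 hk)
      _ = ∑ k ∈ Finset.range n, (1 - y (k+1)) ^ (2*β-2) * (d * (y (k+1) ^ β - y k ^ β)) := by
          rw [Finset.mul_sum]; exact Finset.sum_congr rfl fun k _ => by ring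
  · set s : ℝ := (1-ε)/n with hs
    have hs0 : 0 ≤ s := by positivity
    have hstep0 : (0:ℝ) ≤ s ^ β := Real.rpow_nonneg hs0 β
    have hΔle : ∀ k, y (k+1) ^ β - y k ^ β ≤ s ^ β := by
      intro k
      rw [hysucc k]
      have := aux_rpow_subadd (hynn k) hs0 hβ0.le hβ1
      linarith
    have hΔ0 : ∀ k, 0 ≤ y (k+1) ^ β - y k ^ β := by
      intro k
      have := Real.rpow_le_rpow (hynn k) (hymono (Nat.le_succ k)) hβ0.le
      linarith
    have hG0 : (0:ℝ) ≤ ε ^ (2*β-2) := Real.rpow_nonneg hε0.le _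
    calc (∑ k ∈ Finset.range n, (1 - y (k+1)) ^ (2*β-2) * (d * (y (k+1) ^ β - y k ^ β)))
          - (∑ k ∈ Finset.range n, (1 - y k) ^ (2*β-2) * (d * (y (k+1) ^ β - y k ^ β)))
        = ∑ k ∈ Finset.range n,
            ((1 - y (k+1)) ^ (2*β-2) - (1 - y k) ^ (2*β-2)) * (d * (y (k+1) ^ β - y k ^ β)) := by
          rw [← Finset.sum_sub_distrib]; exact Finset.sum_congr rfl fun k _ => by ring
      _ ≤ ∑ k ∈ Finset.range n,
            (d * s ^ β) * ((1 - y (k+1)) ^ (2*β-2) - (1 - y k) ^ (2*β-2)) := by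
          apply Finset.sum_le_sum
          intro k hk
          have hk' : k + 1 ≤ n := Finset.mem_range.1 hk
          have hggk : (1 - y k) ^ (2*β-2) ≤ (1 - y (k+1)) ^ (2*β-2) :=
            hgg (y k) (y (k+1)) (hynn k) (hymono (Nat.le_succ k)) (hyle _ hk')
          have h1 : d * (y (k+1) ^ β - y k ^ β) ≤ d * s ^ β :=
            mul_le_mul_of_nonneg_left (hΔle k) hd
          have h2 : 0 ≤ d * (y (k+1) ^ β - y k ^ β) := mul_nonneg hd (hΔ0 k)
          nlinarith
      _ = (d * s ^ β) * ((1 - y n) ^ (2*β-2) - (1 - y 0) ^ (2*β-2)) := by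
          rw [← Finset.mul_sum, Finset.sum_range_sub (f := fun k => (1 - y k) ^ (2*β-2))]
      _ ≤ d * ε ^ (2*β-2) * ((1-ε)/n) ^ β := by
          rw [hyn, hy0]
          have h1 : (1:ℝ) - (1 - ε) = ε := by ring
          rw [h1, sub_zero, Real.one_rpow]
          calc (d * s ^ β) * (ε ^ (2*β-2) - 1) ≤ (d * s ^ β) * ε ^ (2*β-2) :=
              mul_le_mul_of_nonneg_left (by linarith) (mul_nonneg hd hstep0)
            _ = d * ε ^ (2*β-2) * s ^ β := by ring

set_option maxHeartbeats 2000000 in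
/-- Convergence step (inter25): if `U_I(ty)/R(t) → Γ_β D y^β` with `R` regularly varying
of index `β ∈ (0,1]`, and `μ̂₂ ≥ 1` is nondecreasing and regularly varying of index
`1-β`, then for fixed `ε ∈ (0,1)`,
`(μ̂₂²(t)/R(t)) ∫₀^{1-ε} μ̂₂(t(1-y))^{-2} dU_I(ty)
  → βΓ_β D ∫₀^{1-ε} (1-y)^{2β-2} y^{β-1} dy`. -/
theorem inter25 (β Γβ : ℝ) (hβ : β ∈ Set.Ioc (0:ℝ) 1) (hΓ : 0 < Γβ)
    (U : Fin 2 → Fin 2 → StieltjesFunction ℝ)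
    (hU0 : ∀ i j t, t < 0 → U i j t = 0)
    (R : ℝ → ℝ) (hRpos : ∀ t > (0:ℝ), 0 < R t)
    (hRrv : ∀ a > (0:ℝ), Tendsto (fun t => R (a * t) / R t) atTop (nhds (a ^ β)))
    (D : Matrix (Fin 2) (Fin 2) ℝ)
    (hUlim : ∀ y > (0:ℝ), ∀ i j,
      Tendsto (fun t => U i j (t * y) / R t) atTop (nhds (Γβ * D i j * y ^ β)))
    (mu : ℝ → ℝ) (hmuMono : Monotone mu) (hmu1 : ∀ t, 1 ≤ mu t)
    (hmurv : ∀ a > (0:ℝ), Tendsto (fun t => mu (a * t) / mu t) atTop (nhds (a ^ (1 - β))))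
    (ε : ℝ) (hε : ε ∈ Set.Ioo (0:ℝ) 1) :
    ∀ i j, Tendsto
      (fun t => (mu t) ^ 2 / R t *
        ∫ w in Set.Icc (0:ℝ) (t * (1 - ε)), (1 / (mu (t - w)) ^ 2) ∂(U i j).measure)
      atTop
      (nhds (β * Γβ * D i j * ∫ y in (0:ℝ)..(1 - ε), (1 - y) ^ (2 * β - 2) * y ^ (β - 1))) := by
  obtain ⟨hβ0, hβ1⟩ := hβ
  obtain ⟨hε0, hε1⟩ := hε
  intro i j
  have h1e : (0:ℝ) ≤ 1 - ε := by linarith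
  set f := U i j with hfdef
  set d := Γβ * D i j with hddef
  have hfneg : ∀ t < 0, f t = 0 := fun t ht => hU0 i j t ht
  have hf_nonneg : ∀ s : ℝ, -1 ≤ s → 0 ≤ f s := by
    intro s hs
    have h1 : f (-1) = 0 := hfneg (-1) (by norm_num)
    rw [← h1]
    exact f.mono hs
  have hd0 : 0 ≤ d := by
    have h1 := hUlim 1 one_pos i j
    have h2 : (0:ℝ) ≤ d * 1 ^ β := by
      apply ge_of_tendsto h1
      filter_upwards [eventually_gt_atTop (0:ℝ)] with t ht
      exact div_nonneg (hf_nonneg _ (by linarith [mul_one t])) (hRpos t ht).le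
    simpa using h2
  have hT : β * Γβ * D i j * (∫ u in (0:ℝ)..(1 - ε), (1 - u) ^ (2 * β - 2) * u ^ (β - 1))
      = d * (β * ∫ u in (0:ℝ)..(1 - ε), (1 - u) ^ (2 * β - 2) * u ^ (β - 1)) := by
    rw [hddef]; ring
  rw [hT]
  rw [Metric.tendsto_nhds]
  intro δ hδ
  -- choose the number of partition points
  have hG0 : (0:ℝ) < ε ^ (2*β-2) := Real.rpow_pos_of_pos hε0 _
  set δ' := δ/3 / (d * ε ^ (2*β-2) + 1) with hδ'def
  have hδ'pos : 0 < δ' := by rw [hδ'def]; positivity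
  obtain ⟨n, hnbig⟩ := exists_nat_gt (max 1 ((1-ε) / δ' ^ (1/β)))
  have hn1 : 1 ≤ n := by
    have h1 : (1:ℝ) < n := (le_max_left _ _).trans_lt hnbig
    exact_mod_cast h1.le
  have hnpos : (0:ℝ) < n := by
    have : (0:ℕ) < n := hn1
    exact_mod_cast this
  have hngt : (1-ε) / δ' ^ (1/β) < n := (le_max_right _ _).trans_lt hnbig
  have hstep : ((1-ε)/n) ^ β ≤ δ' := by
    have hp : (0:ℝ) < δ' ^ (1/β) := Real.rpow_pos_of_pos hδ'pos _
    have h1 : (1-ε)/n ≤ δ' ^ (1/β) := by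
      rw [div_le_iff₀ hnpos]
      rw [div_lt_iff₀ hp] at hngt
      nlinarith
    calc ((1-ε)/n) ^ β ≤ (δ' ^ (1/β)) ^ β := Real.rpow_le_rpow (by positivity) h1 hβ0.le
      _ = δ' := by
          rw [← Real.rpow_mul hδ'pos.le, one_div_mul_cancel (ne_of_gt hβ0), Real.rpow_one]
  -- the partition
  obtain ⟨y, hy⟩ : ∃ y : ℕ → ℝ, ∀ k, y k = (1-ε) * k / n :=
    ⟨fun k => (1-ε) * k / n, fun k => rfl⟩
  have hy0 : y 0 = 0 := by simp [hy]
  have hyn : y n = 1 - ε := by rw [hy]; field_simp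
  have hymono : Monotone y := by
    intro a b hab
    rw [hy, hy]
    have hc : (a:ℝ) ≤ (b:ℝ) := Nat.cast_le.2 hab
    have := hnpos
    gcongr
  have hynn : ∀ k, 0 ≤ y k := by
    intro k; rw [hy]; positivity
  have hyle : ∀ k, k ≤ n → y k ≤ 1 - ε := fun k hk => hyn ▸ hymono hk
  have hypos : ∀ k, 1 ≤ k → 0 < y k := by
    intro k hk
    rw [hy]
    have hck : (0:ℝ) < k := by exact_mod_cast hk
    have h2 : (0:ℝ) < 1 - ε := by linarith
    positivity
  have h1yk : ∀ k, k ≤ n → 0 < 1 - y k := by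
    intro k hk
    have := hyle k hk
    linarith
  obtain ⟨hA, hB, hC⟩ := aux_riemann β ε d hβ0 hβ1 hε0 hε1 hd0 n hn1 y hy
  have hgap : (∑ k ∈ Finset.range n, (1 - y (k+1)) ^ (2*β-2) * (d * (y (k+1) ^ β - y k ^ β)))
      - (∑ k ∈ Finset.range n, (1 - y k) ^ (2*β-2) * (d * (y (k+1) ^ β - y k ^ β)))
      ≤ δ/3 := by
    have h2 : d * ε ^ (2*β-2) * ((1-ε)/n) ^ β ≤ d * ε ^ (2*β-2) * δ' :=
      mul_le_mul_of_nonneg_left hstep (by positivity)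
    have h3 : d * ε ^ (2*β-2) * δ' ≤ (d * ε ^ (2*β-2) + 1) * δ' := by nlinarith
    have h4 : (d * ε ^ (2*β-2) + 1) * δ' = δ/3 := by
      rw [hδ'def]
      field_simp
    linarith
  -- the time-dependent Riemann sums
  obtain ⟨M, hM⟩ : ∃ M : ℕ → ℝ → ℝ, ∀ k t,
      M k t = (f (t * y (k+1)) - (if k = 0 then 0 else f (t * y k))) / R t :=
    ⟨_, fun k t => rfl⟩
  have hMlim : ∀ k, k < n → Tendsto (M k) atTop (nhds (d * (y (k+1) ^ β - y k ^ β))) := by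
    intro k hk
    rcases Nat.eq_zero_or_pos k with hk0 | hk1
    · subst hk0
      have h1 := hUlim (y 1) (hypos 1 le_rfl) i j
      have h2 : Tendsto (M 0) atTop (nhds (d * y 1 ^ β)) := by
        apply h1.congr
        intro t
        rw [hM]
        simp [hfdef]
      have h3 : d * (y (0+1) ^ β - y 0 ^ β) = d * y 1 ^ β := by
        rw [hy0, Real.zero_rpow (ne_of_gt hβ0)]
        norm_num
      rw [h3]
      exact h2
    · have hk1' : (1:ℕ) ≤ k := hk1
      have h1 := hUlim (y (k+1)) (hypos (k+1) (by omega)) i j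
      have h2 := hUlim (y k) (hypos k hk1') i j
      have h3 := h1.sub h2
      have h4 : Tendsto (M k) atTop
          (nhds (d * y (k+1) ^ β - d * y k ^ β)) := by
        apply h3.congr
        intro t
        rw [hM, if_neg (Nat.one_le_iff_ne_zero.1 hk1'), sub_div]
      have h5 : d * (y (k+1) ^ β - y k ^ β) = d * y (k+1) ^ β - d * y k ^ β := by ring
      rw [h5]
      exact h4
  have hLoLim : Tendsto (fun t => ∑ k ∈ Finset.range n,
      (mu t / mu (t * (1 - y k))) ^ 2 * M k t) atTop
      (nhds (∑ k ∈ Finset.range n, (1 - y k) ^ (2*β-2) * (d * (y (k+1) ^ β - y k ^ β)))) := by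
    apply tendsto_finset_sum
    intro k hk
    exact (aux_mu_ratio β mu hmurv (1 - y k)
      (h1yk k (Finset.mem_range.1 hk).le)).mul (hMlim k (Finset.mem_range.1 hk))
  have hHiLim : Tendsto (fun t => ∑ k ∈ Finset.range n,
      (mu t / mu (t * (1 - y (k+1)))) ^ 2 * M k t) atTop
      (nhds (∑ k ∈ Finset.range n, (1 - y (k+1)) ^ (2*β-2) * (d * (y (k+1) ^ β - y k ^ β)))) := by
    apply tendsto_finset_sum
    intro k hk
    exact (aux_mu_ratio β mu hmurv (1 - y (k+1))
      (h1yk (k+1) (Finset.mem_range.1 hk))).mul (hMlim k (Finset.mem_range.1 hk))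
  -- the sandwich
  have hsand : ∀ t : ℝ, 0 < t →
      (∑ k ∈ Finset.range n, (mu t / mu (t * (1 - y k))) ^ 2 * M k t)
        ≤ (mu t) ^ 2 / R t *
          ∫ w in Set.Icc (0:ℝ) (t * (1 - ε)), (1 / (mu (t - w)) ^ 2) ∂f.measure ∧
      ((mu t) ^ 2 / R t *
          ∫ w in Set.Icc (0:ℝ) (t * (1 - ε)), (1 / (mu (t - w)) ^ 2) ∂f.measure)
        ≤ ∑ k ∈ Finset.range n, (mu t / mu (t * (1 - y (k+1)))) ^ 2 * M k t := by
    intro t ht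
    have hRt : 0 < R t := hRpos t ht
    have hxmono : Monotone (fun k => t * y k) :=
      fun a b hab => mul_le_mul_of_nonneg_left (hymono hab) ht.le
    have hx0 : t * y 0 = 0 := by rw [hy0]; ring
    have hhm : Monotone (fun w => 1 / (mu (t - w)) ^ 2) := by
      intro a b hab
      have h1 : mu (t - b) ≤ mu (t - a) := hmuMono (by linarith)
      have h2 : (0:ℝ) < mu (t - b) := lt_of_lt_of_le one_pos (hmu1 _)
      have h3 : (0:ℝ) < mu (t - a) := lt_of_lt_of_le one_pos (hmu1 _)
      exact one_div_le_one_div_of_le (by positivity) (pow_le_pow_left₀ h2.le h1 2)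
    have hhmeas : Measurable (fun w => 1 / (mu (t - w)) ^ 2) :=
      measurable_const.div
        (((hmuMono.measurable.comp (measurable_const.sub measurable_id))).pow_const 2)
    have hnn' : ∀ w, 0 ≤ 1 / (mu (t - w)) ^ 2 := by
      intro w
      have := lt_of_lt_of_le one_pos (hmu1 (t - w))
      positivity
    have hb1 : ∀ w, 1 / (mu (t - w)) ^ 2 ≤ 1 := by
      intro w
      have h2 : (0:ℝ) < mu (t - w) := lt_of_lt_of_le one_pos (hmu1 _)
      rw [div_le_one (by positivity)]
      nlinarith [hmu1 (t - w)]
    have key := aux_sandwich f (fun w => 1 / (mu (t - w)) ^ 2) hhm hhmeas hnn' hb1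
      (fun k => t * y k) hxmono n hn1
    beta_reduce at key
    rw [hx0, hyn] at key
    obtain ⟨klow, khigh⟩ := key
    have hc : (0:ℝ) ≤ (mu t) ^ 2 / R t := by positivity
    have halg : ∀ a b r A : ℝ, b ≠ 0 → r ≠ 0 →
        a ^ 2 / r * (1 / b ^ 2 * A) = (a / b) ^ 2 * (A / r) := by
      intro a b r A hb hr
      rw [div_pow]
      field_simp
    have hsumeqlo : (mu t) ^ 2 / R t * (∑ k ∈ Finset.range n,
        (1 / (mu (t - t * y k)) ^ 2) * (f.measure (piece (fun k => t * y k) k)).toReal)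
        = ∑ k ∈ Finset.range n, (mu t / mu (t * (1 - y k))) ^ 2 * M k t := by
      rw [Finset.mul_sum]
      apply Finset.sum_congr rfl
      intro k hk
      rw [piece_toReal f hfneg _ hxmono hx0 k, hM]
      have harg : t - t * y k = t * (1 - y k) := by ring
      rw [harg]
      have hmup : (0:ℝ) < mu (t * (1 - y k)) := lt_of_lt_of_le one_pos (hmu1 _)
      exact halg _ _ _ _ (ne_of_gt hmup) (ne_of_gt hRt)
    have hsumeqhi : (mu t) ^ 2 / R t * (∑ k ∈ Finset.range n,
        (1 / (mu (t - t * y (k+1))) ^ 2) * (f.measure (piece (fun k => t * y k) k)).toReal)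
        = ∑ k ∈ Finset.range n, (mu t / mu (t * (1 - y (k+1)))) ^ 2 * M k t := by
      rw [Finset.mul_sum]
      apply Finset.sum_congr rfl
      intro k hk
      rw [piece_toReal f hfneg _ hxmono hx0 k, hM]
      have harg : t - t * y (k+1) = t * (1 - y (k+1)) := by ring
      rw [harg]
      have hmup : (0:ℝ) < mu (t * (1 - y (k+1))) := lt_of_lt_of_le one_pos (hmu1 _)
      exact halg _ _ _ _ (ne_of_gt hmup) (ne_of_gt hRt)
    constructor
    · rw [← hsumeqlo]
      exact mul_le_mul_of_nonneg_left klow hc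
    · rw [← hsumeqhi]
      exact mul_le_mul_of_nonneg_left khigh hc
  -- put everything together
  have e1 : ∀ᶠ t in atTop, |(∑ k ∈ Finset.range n,
      (mu t / mu (t * (1 - y k))) ^ 2 * M k t)
      - ∑ k ∈ Finset.range n, (1 - y k) ^ (2*β-2) * (d * (y (k+1) ^ β - y k ^ β))| < δ/3 := by
    have := Metric.tendsto_nhds.1 hLoLim (δ/3) (by linarith)
    simpa [Real.dist_eq] using this
  have e2 : ∀ᶠ t in atTop, |(∑ k ∈ Finset.range n,
      (mu t / mu (t * (1 - y (k+1)))) ^ 2 * M k t)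
      - ∑ k ∈ Finset.range n, (1 - y (k+1)) ^ (2*β-2) * (d * (y (k+1) ^ β - y k ^ β))| < δ/3 := by
    have := Metric.tendsto_nhds.1 hHiLim (δ/3) (by linarith)
    simpa [Real.dist_eq] using this
  filter_upwards [e1, e2, eventually_gt_atTop (0:ℝ)] with t h1 h2 h3
  obtain ⟨hlow, hhigh⟩ := hsand t h3
  rw [Real.dist_eq, abs_sub_lt_iff]
  rw [abs_sub_lt_iff] at h1 h2
  constructor
  · linarith [h1.1, h1.2, h2.1, h2.2, hA, hB, hgap]
  · linarith [h1.1, h1.2, h2.1, h2.2, hA, hB, hgap]
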